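/- Let U ⊆ ℝ² be an open set and let H : U → ℝ be twice continuously differentiable with ∂²H/∂x∂y = 0 and e^{H}·∂H/∂x + ∂H/∂y = 2(e^{H} − 1) at every point of U. Then at every point of U, ∂²H/∂x² + (∂H/∂x)² = 2·∂H/∂x and ∂²H/∂y² − (∂H/∂y)² = 2·∂H/∂y. -/

import Mathlib

/-- If a C² function `H` on an open set `U ⊆ ℝ²` satisfies `∂²H/∂x∂y = 0` and
`e^H ∂H/∂x + ∂H/∂y = 2(e^H − 1)`, then `∂²H/∂x² + (∂H/∂x)² = 2 ∂H/∂x` and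
`∂²H/∂y² − (∂H/∂y)² = 2 ∂H/∂y` on `U`. -/
theorem H_second_order_ODEs (U : Set (ℝ × ℝ)) (hU : IsOpen U)
    (H : ℝ × ℝ → ℝ) (hHC2 : ContDiffOn ℝ 2 H U)
    (hmixed : ∀ p ∈ U,
      deriv (fun x => deriv (fun y => H (x, y)) p.2) p.1 = 0)
    (heq : ∀ p ∈ U,
      Real.exp (H p) * deriv (fun x => H (x, p.2)) p.1
        + deriv (fun y => H (p.1, y)) p.2 = 2 * (Real.exp (H p) - 1)) :
    ∀ p ∈ U,
      (deriv (fun x => deriv (fun x' => H (x', p.2)) x) p.1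
          + (deriv (fun x => H (x, p.2)) p.1) ^ 2
        = 2 * deriv (fun x => H (x, p.2)) p.1) ∧
      (deriv (fun y => deriv (fun y' => H (p.1, y')) y) p.2
          - (deriv (fun y => H (p.1, y)) p.2) ^ 2
        = 2 * deriv (fun y => H (p.1, y)) p.2) := by
  have hdiff : ∀ q ∈ U, DifferentiableAt ℝ H q := fun q hq =>
    ((hHC2.contDiffAt (hU.mem_nhds hq)).differentiableAt two_ne_zero)
  have hA : ∀ q ∈ U, deriv (fun x => H (x, q.2)) q.1 = fderiv ℝ H q (1, 0) := by
    intro q hq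
    have hl : HasDerivAt (fun x : ℝ => (x, q.2)) ((1:ℝ), (0:ℝ)) q.1 :=
      HasDerivAt.prodMk (hasDerivAt_id q.1) (hasDerivAt_const q.1 q.2)
    exact (((hdiff q hq).hasFDerivAt).comp_hasDerivAt q.1 hl).deriv
  have hB : ∀ q ∈ U, deriv (fun y => H (q.1, y)) q.2 = fderiv ℝ H q (0, 1) := by
    intro q hq
    have hl : HasDerivAt (fun y : ℝ => (q.1, y)) ((0:ℝ), (1:ℝ)) q.2 :=
      HasDerivAt.prodMk (hasDerivAt_const q.2 q.1) (hasDerivAt_id q.2)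
    exact (((hdiff q hq).hasFDerivAt).comp_hasDerivAt q.2 hl).deriv
  rintro ⟨a, b⟩ hp
  have hC2p : ContDiffAt ℝ 2 H (a, b) := hHC2.contDiffAt (hU.mem_nhds hp)
  have hfd : DifferentiableAt ℝ (fderiv ℝ H) (a, b) :=
    (hC2p.fderiv_right (m := 1) le_rfl).differentiableAt one_ne_zero
  have hsymm : IsSymmSndFDerivAt ℝ H (a, b) := hC2p.isSymmSndFDerivAt (by simp)
  set F2 := fderiv ℝ (fderiv ℝ H) (a, b) with hF2
  set Hx := fderiv ℝ H (a, b) (1, 0) with hHx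
  set Hy := fderiv ℝ H (a, b) (0, 1) with hHy
  have hlinex : HasDerivAt (fun x : ℝ => (x, b)) ((1:ℝ), (0:ℝ)) a :=
    HasDerivAt.prodMk (hasDerivAt_id a) (hasDerivAt_const a b)
  have hliney : HasDerivAt (fun y : ℝ => (a, y)) ((0:ℝ), (1:ℝ)) b :=
    HasDerivAt.prodMk (hasDerivAt_const b a) (hasDerivAt_id b)
  -- eventually on the two lines we are in U
  have hUx : ∀ᶠ x in nhds a, (x, b) ∈ U := by
    have hc : ContinuousAt (fun x : ℝ => (x, b)) a :=
      (continuous_id.prodMk continuous_const).continuousAt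
    exact hc.preimage_mem_nhds (hU.mem_nhds hp)
  have hUy : ∀ᶠ y in nhds b, (a, y) ∈ U := by
    have hc : ContinuousAt (fun y : ℝ => (a, y)) b :=
      (continuous_const.prodMk continuous_id).continuousAt
    exact hc.preimage_mem_nhds (hU.mem_nhds hp)
  -- derivatives of the partial derivatives along the lines
  have h1x : HasDerivAt (fun x => fderiv ℝ H (x, b)) (F2 (1, 0)) a :=
    (hfd.hasFDerivAt).comp_hasDerivAt a hlinex
  have h1y : HasDerivAt (fun y => fderiv ℝ H (a, y)) (F2 (0, 1)) b :=
    (hfd.hasFDerivAt).comp_hasDerivAt b hliney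
  have hxx : HasDerivAt (fun x => fderiv ℝ H (x, b) (1, 0)) (F2 (1, 0) (1, 0)) a := by
    simpa using h1x.clm_apply (hasDerivAt_const a ((1:ℝ), (0:ℝ)))
  have hxy : HasDerivAt (fun x => fderiv ℝ H (x, b) (0, 1)) (F2 (1, 0) (0, 1)) a := by
    simpa using h1x.clm_apply (hasDerivAt_const a ((0:ℝ), (1:ℝ)))
  have hyx : HasDerivAt (fun y => fderiv ℝ H (a, y) (1, 0)) (F2 (0, 1) (1, 0)) b := by
    simpa using h1y.clm_apply (hasDerivAt_const b ((1:ℝ), (0:ℝ)))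
  have hyy : HasDerivAt (fun y => fderiv ℝ H (a, y) (0, 1)) (F2 (0, 1) (0, 1)) b := by
    simpa using h1y.clm_apply (hasDerivAt_const b ((0:ℝ), (1:ℝ)))
  -- first derivatives along the lines
  have hHxline : HasDerivAt (fun x => H (x, b)) Hx a :=
    ((hdiff (a, b) hp).hasFDerivAt).comp_hasDerivAt a hlinex
  have hHyline : HasDerivAt (fun y => H (a, y)) Hy b :=
    ((hdiff (a, b) hp).hasFDerivAt).comp_hasDerivAt b hliney
  -- the mixed partial vanishes
  have hmix0 : F2 (1, 0) (0, 1) = 0 := by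
    have hev : (fun x => deriv (fun y => H (x, y)) b)
        =ᶠ[nhds a] (fun x => fderiv ℝ H (x, b) (0, 1)) := by
      filter_upwards [hUx] with x hx
      simpa using hB (x, b) hx
    have := hmixed (a, b) hp
    simp only at this
    rw [hev.deriv_eq, hxy.deriv] at this
    exact this
  have hmix0' : F2 (0, 1) (1, 0) = 0 := by
    rw [hsymm (0, 1) (1, 0)]; exact hmix0
  -- the PDE along the lines
  have hpdex : (fun x => Real.exp (H (x, b)) * fderiv ℝ H (x, b) (1, 0)
      + fderiv ℝ H (x, b) (0, 1))
      =ᶠ[nhds a] (fun x => 2 * (Real.exp (H (x, b)) - 1)) := by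
    filter_upwards [hUx] with x hx
    have := heq (x, b) hx
    simp only at this
    rw [hA (x, b) hx, hB (x, b) hx] at this
    simpa using this
  have hpdey : (fun y => Real.exp (H (a, y)) * fderiv ℝ H (a, y) (1, 0)
      + fderiv ℝ H (a, y) (0, 1))
      =ᶠ[nhds b] (fun y => 2 * (Real.exp (H (a, y)) - 1)) := by
    filter_upwards [hUy] with y hy
    have := heq (a, y) hy
    simp only at this
    rw [hA (a, y) hy, hB (a, y) hy] at this
    simpa using this
  -- differentiate the PDE along the x-line
  have hLx : HasDerivAt (fun x => Real.exp (H (x, b)) * fderiv ℝ H (x, b) (1, 0)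
      + fderiv ℝ H (x, b) (0, 1))
      (Real.exp (H (a, b)) * Hx * Hx + Real.exp (H (a, b)) * F2 (1, 0) (1, 0)
        + F2 (1, 0) (0, 1)) a :=
    ((hHxline.exp.mul hxx).add hxy)
  have hRx : HasDerivAt (fun x => 2 * (Real.exp (H (x, b)) - 1))
      (2 * (Real.exp (H (a, b)) * Hx)) a :=
    ((hHxline.exp.sub_const 1).const_mul 2)
  have hLx' : HasDerivAt (fun x => Real.exp (H (x, b)) * fderiv ℝ H (x, b) (1, 0)
      + fderiv ℝ H (x, b) (0, 1))
      (2 * (Real.exp (H (a, b)) * Hx)) a := hRx.congr_of_eventuallyEq hpdex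
  have Ex : Real.exp (H (a, b)) * Hx * Hx + Real.exp (H (a, b)) * F2 (1, 0) (1, 0)
      + F2 (1, 0) (0, 1) = 2 * (Real.exp (H (a, b)) * Hx) := hLx.unique hLx'
  -- differentiate the PDE along the y-line
  have hLy : HasDerivAt (fun y => Real.exp (H (a, y)) * fderiv ℝ H (a, y) (1, 0)
      + fderiv ℝ H (a, y) (0, 1))
      (Real.exp (H (a, b)) * Hy * Hx + Real.exp (H (a, b)) * F2 (0, 1) (1, 0)
        + F2 (0, 1) (0, 1)) b :=
    ((hHyline.exp.mul hyx).add hyy)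
  have hRy : HasDerivAt (fun y => 2 * (Real.exp (H (a, y)) - 1))
      (2 * (Real.exp (H (a, b)) * Hy)) b :=
    ((hHyline.exp.sub_const 1).const_mul 2)
  have hLy' : HasDerivAt (fun y => Real.exp (H (a, y)) * fderiv ℝ H (a, y) (1, 0)
      + fderiv ℝ H (a, y) (0, 1))
      (2 * (Real.exp (H (a, b)) * Hy)) b := hRy.congr_of_eventuallyEq hpdey
  have Ey : Real.exp (H (a, b)) * Hy * Hx + Real.exp (H (a, b)) * F2 (0, 1) (1, 0)
      + F2 (0, 1) (0, 1) = 2 * (Real.exp (H (a, b)) * Hy) := hLy.unique hLy'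
  -- rewrite the goal
  have hgx : deriv (fun x => deriv (fun x' => H (x', b)) x) a = F2 (1, 0) (1, 0) := by
    have hev : (fun x => deriv (fun x' => H (x', b)) x)
        =ᶠ[nhds a] (fun x => fderiv ℝ H (x, b) (1, 0)) := by
      filter_upwards [hUx] with x hx
      simpa using hA (x, b) hx
    rw [hev.deriv_eq, hxx.deriv]
  have hgy : deriv (fun y => deriv (fun y' => H (a, y')) y) b = F2 (0, 1) (0, 1) := by
    have hev : (fun y => deriv (fun y' => H (a, y')) y)
        =ᶠ[nhds b] (fun y => fderiv ℝ H (a, y) (0, 1)) := by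
      filter_upwards [hUy] with y hy
      simpa using hB (a, y) hy
    rw [hev.deriv_eq, hyy.deriv]
  have hA0 : deriv (fun x => H (x, b)) a = Hx := by simpa using hA (a, b) hp
  have hB0 : deriv (fun y => H (a, y)) b = Hy := by simpa using hB (a, b) hp
  have hpde0 : Real.exp (H (a, b)) * Hx + Hy = 2 * (Real.exp (H (a, b)) - 1) := by
    have := heq (a, b) hp
    simp only at this
    rw [hA0, hB0] at this
    exact this
  constructor
  · show deriv (fun x => deriv (fun x' => H (x', b)) x) a
      + (deriv (fun x => H (x, b)) a) ^ 2 = 2 * deriv (fun x => H (x, b)) a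
    rw [hgx, hA0]
    rw [hmix0] at Ex
    have key : Real.exp (H (a, b)) * (F2 (1, 0) (1, 0) + Hx ^ 2 - 2 * Hx) = 0 := by
      linear_combination Ex
    have := (mul_eq_zero.mp key).resolve_left (Real.exp_ne_zero _)
    linarith
  · show deriv (fun y => deriv (fun y' => H (a, y')) y) b
      - (deriv (fun y => H (a, y)) b) ^ 2 = 2 * deriv (fun y => H (a, y)) b
    rw [hgy, hB0]
    rw [hmix0'] at Ey
    linear_combination Ey - Hy * hpde0
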